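/- Let A ∈ ℝ^{m×n}, b ∈ ℝ^m, x ∈ ℝⁿ, and X ∈ ℝ^{n×n}, and let Y ∈ ℝ^{(n+1)×(n+1)} be the block matrix Y = [[1, xᵀ], [x, X]]. Suppose Y is positive semidefinite. Let M = [b, −A] ∈ ℝ^{m×(n+1)} (the matrix whose first column is b and whose remaining columns are −A). Then the following three conditions are equivalent: (1) Ax = b and (AXAᵀ)_{ii} = b_i² for every i ∈ {1,…,m}; (2) MYMᵀ = 0; (3) MY = 0. -/

import Mathlib

open Matrix BigOperators

lemma psd_diag_zero_aux {k : ℕ} {P : Matrix (Fin k) (Fin k) ℝ} (hP : P.PosSemidef)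
    (h : ∀ i, P i i = 0) : P = 0 := by
  obtain ⟨C, rfl⟩ := (by open scoped MatrixOrder in exact CStarAlgebra.nonneg_iff_eq_star_mul_self.mp hP.nonneg : ∃ C : Matrix (Fin k) (Fin k) ℝ, P = Cᴴ * C)
  suffices hC : C = 0 by simp [hC]
  ext a i
  have hv : (fun l => C l i) ⬝ᵥ (fun l => C l i) = 0 := by
    simpa [dotProduct, Matrix.mul_apply, Matrix.conjTranspose_apply] using h i
  exact congrFun (dotProduct_self_eq_zero.mp hv) a

/-- Burer's Proposition, Proposition 4 of the paper: for
`Y = [[1, xᵀ],[x, X]] ⪰ 0` and `M = [b, −A]`, the following are equivalent: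
(1) `Ax = b` and `diag(AXAᵀ) = b²`; (2) `MYMᵀ = 0`; (3) `MY = 0`. -/
theorem stmt_11 (n m : ℕ) (hn : 1 ≤ n) (hm : 1 ≤ m)
    (A : Matrix (Fin m) (Fin n) ℝ) (b : Fin m → ℝ)
    (x : Fin n → ℝ) (X : Matrix (Fin n) (Fin n) ℝ)
    (Y : Matrix (Fin (n + 1)) (Fin (n + 1)) ℝ)
    (hY00 : Y 0 0 = 1)
    (hY0j : ∀ j : Fin n, Y 0 j.succ = x j)
    (hYi0 : ∀ i : Fin n, Y i.succ 0 = x i)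
    (hYij : ∀ i j : Fin n, Y i.succ j.succ = X i j)
    (hYpsd : Y.PosSemidef)
    (M : Matrix (Fin m) (Fin (n + 1)) ℝ)
    (hM0 : ∀ i : Fin m, M i 0 = b i)
    (hMj : ∀ (i : Fin m) (j : Fin n), M i j.succ = -A i j) :
    ((A.mulVec x = b ∧ ∀ i : Fin m, (A * X * Aᵀ) i i = (b i) ^ 2) ↔
      M * Y * Mᵀ = 0) ∧
    (M * Y * Mᵀ = 0 ↔ M * Y = 0) := by
  -- entry computations
  have hMY : ∀ (i : Fin m) (k : Fin (n + 1)),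
      (M * Y) i k = b i * Y 0 k - ∑ j, A i j * Y j.succ k := by
    intro i k
    rw [Matrix.mul_apply, Fin.sum_univ_succ, hM0]
    simp [hMj, sub_eq_add_neg, Finset.sum_neg_distrib]
  have hMY0 : ∀ i : Fin m, (M * Y) i 0 = b i - A.mulVec x i := by
    intro i
    rw [hMY, hY00, mul_one, Matrix.mulVec, dotProduct]
    simp [hYi0]
  have hMYsucc : ∀ (i : Fin m) (j : Fin n),
      (M * Y) i j.succ = b i * x j - ∑ j', A i j' * X j' j := by
    intro i j
    rw [hMY, hY0j]
    simp [hYij]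
  have hP : ∀ i : Fin m, (M * Y * Mᵀ) i i
      = (b i - A.mulVec x i) * b i - ∑ j, (b i * x j - ∑ j', A i j' * X j' j) * A i j := by
    intro i
    rw [Matrix.mul_apply, Fin.sum_univ_succ]
    simp only [Matrix.transpose_apply, hM0, hMj, hMY0, hMYsucc]
    simp [sub_eq_add_neg, Finset.sum_neg_distrib]
  have hAXAT : ∀ i : Fin m, (A * X * Aᵀ) i i = ∑ j, (∑ j', A i j' * X j' j) * A i j := by
    intro i
    simp [Matrix.mul_apply]
  have hAx : ∀ i : Fin m, A.mulVec x i = ∑ j, A i j * x j := by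
    intro i; rfl
  -- second iff
  obtain ⟨B, hB⟩ := (by open scoped MatrixOrder in exact CStarAlgebra.nonneg_iff_eq_star_mul_self.mp hYpsd.nonneg : ∃ B : Matrix (Fin (n + 1)) (Fin (n + 1)) ℝ, Y = Bᴴ * B)
  have hMH : Mᵀ = Mᴴ := (Matrix.conjTranspose_eq_transpose_of_trivial M).symm
  have iff23 : M * Y * Mᵀ = 0 ↔ M * Y = 0 := by
    constructor
    · intro h
      have hsplit : M * Y * Mᵀ = (M * Bᴴ) * (M * Bᴴ)ᴴ := by
        rw [hB, hMH, Matrix.conjTranspose_mul, Matrix.conjTranspose_conjTranspose]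
        simp only [Matrix.mul_assoc]
      rw [hsplit, Matrix.self_mul_conjTranspose_eq_zero] at h
      rw [hB, ← Matrix.mul_assoc, h, Matrix.zero_mul]
    · intro h
      rw [h, Matrix.zero_mul]
  refine ⟨?_, iff23⟩
  constructor
  · rintro ⟨h1, h2⟩
    have hpsd : (M * Y * Mᵀ).PosSemidef := by
      rw [hMH]; exact hYpsd.mul_mul_conjTranspose_same M
    apply psd_diag_zero_aux hpsd
    intro i
    have hsum : ∑ j, (b i * x j - ∑ j', A i j' * X j' j) * A i j
        = b i * A.mulVec x i - (A * X * Aᵀ) i i := by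
      rw [hAXAT, hAx, Finset.mul_sum, ← Finset.sum_sub_distrib]
      congr 1; funext j; ring
    rw [hP i, hsum, h2 i, h1]
    ring
  · intro h
    have hMYzero : M * Y = 0 := iff23.mp h
    have h1 : A.mulVec x = b := by
      funext i
      have := congrFun (congrFun hMYzero i) 0
      rw [hMY0] at this
      simp only [Matrix.zero_apply] at this
      linarith
    refine ⟨h1, fun i => ?_⟩
    have := congrFun (congrFun h i) i
    rw [hP] at this
    simp only [Matrix.zero_apply] at this
    rw [hAXAT]
    have hx : A.mulVec x i = b i := by rw [h1]
    rw [hx] at this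
    have hsum : ∑ j, (b i * x j - ∑ j', A i j' * X j' j) * A i j
        = b i * A.mulVec x i - ∑ j, (∑ j', A i j' * X j' j) * A i j := by
      rw [hAx, Finset.mul_sum]
      rw [← Finset.sum_sub_distrib]
      congr 1; funext j; ring
    rw [hsum, hx] at this
    nlinarith [this]
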